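/- Let T > 0, γ > 0, r > 0, σ_F > 0, μ_F ∈ ℝ, p₂ < 1 with p₂ ≠ 0, λ > 0, V̄ > 0, ψ > 0 and F₀ > 0, and assume Case I, i.e. D := 1 + σ_F(p₂ − 1)/γ > 0. Let W_T be a Gaussian random variable with mean 0 and variance T, set Z := exp(−(r + γ²/2)T − γ W_T), A := ψ F₀ h(0,T) and F_ψ := A · Z^(−σ_F/γ) (the terminal fixed-term position ψF(T)). Then the Case I conditional value function formula holds: E[(1/p₂) · max(V̄, F_ψ, (λZ)^(1/(p₂−1)))^(p₂)] = (1/p₂)·V̄^(p₂) · ξ(T, 0, 1, 0, max{(A/V̄)^(γ/σ_F), V̄^(p₂−1)/λ}, +∞) + (1/p₂)·A^(p₂) · ξ(T, 0, 1, −σ_F p₂/γ, (A^(p₂−1)/λ)^(1/D), (A/V̄)^(γ/σ_F)) + (1/p₂)·λ^(p₂/(p₂−1)) · ξ(T, 0, 1, p₂/(p₂−1), 0, min{V̄^(p₂−1)/λ, (A^(p₂−1)/λ)^(1/D)}). -/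

import Mathlib

open MeasureTheory ProbabilityTheory

open scoped ENNReal

/-- Cumulative distribution function of the standard normal distribution. -/
noncomputable def Phi (x : ℝ) : ℝ := ((gaussianReal 0 1) (Set.Iic x)).toReal

/-- `Φ(d̄(x) + kγ√(s − t))`, where `d̄(x) = (ln(z/x) − (r + γ²/2)(s − t)) / (γ √(s − t))`
for `x ∈ (0, ∞)`, with the conventions `Φ(d̄(0) + u) = 1` and `Φ(d̄(∞) + u) = 0`. -/
noncomputable def PhiDbar (γ r s t z k : ℝ) (x : ℝ≥0∞) : ℝ :=
  if x = 0 then 1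
  else if x = ⊤ then 0
  else Phi ((Real.log (z / x.toReal) - (r + γ ^ 2 / 2) * (s - t)) / (γ * Real.sqrt (s - t))
      + k * γ * Real.sqrt (s - t))

/-- `ξ(s, t, z, k, a, b; γ, r)`. -/
noncomputable def xi (γ r s t z k : ℝ) (a b : ℝ≥0∞) : ℝ :=
  z ^ k * Real.exp (-k * (r + γ ^ 2 / 2) * (s - t) + k ^ 2 * γ ^ 2 / 2 * (s - t)) *
    (PhiDbar γ r s t z k a - PhiDbar γ r s t z k b) * (if a < b then 1 else 0)

/-- `h(t₁, t₂) = exp((μ_F − σ_F²/2 − σ_F r/γ − σ_F γ/2)(t₂ − t₁))`. -/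
noncomputable def hF (γ r μF σF t₁ t₂ : ℝ) : ℝ :=
  Real.exp ((μF - σF ^ 2 / 2 - σF * r / γ - σF * γ / 2) * (t₂ - t₁))

/-! ### Auxiliary lemmas -/

open scoped NNReal

lemma coe_toNNReal_T {T : ℝ} (hT : 0 < T) : ((T.toNNReal : ℝ≥0) : ℝ) = T :=
  Real.coe_toNNReal _ hT.le

lemma toNNReal_T_ne {T : ℝ} (hT : 0 < T) : T.toNNReal ≠ 0 := by
  simp [Real.toNNReal_eq_zero, not_le, hT]

lemma pdf_mul_exp (T : ℝ) (hT : 0 < T) (c w : ℝ) :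
    gaussianPDFReal 0 T.toNNReal w * Real.exp (c * w)
      = Real.exp (c ^ 2 * T / 2) * gaussianPDFReal (c * T) T.toNNReal w := by
  have h := coe_toNNReal_T hT
  have key : Real.exp (c * w) * Real.exp (-(w - 0) ^ 2 / (2 * T))
      = Real.exp (c ^ 2 * T / 2) * Real.exp (-(w - c * T) ^ 2 / (2 * T)) := by
    rw [← Real.exp_add, ← Real.exp_add]
    congr 1
    field_simp
    ring
  simp only [gaussianPDFReal, h]
  linear_combination (Real.sqrt (2 * Real.pi * T))⁻¹ * key

lemma integral_exp_gaussian (T : ℝ) (hT : 0 < T) (c : ℝ) {s : Set ℝ} (hs : MeasurableSet s) :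
    ∫ w in s, Real.exp (c * w) ∂(gaussianReal 0 T.toNNReal)
      = Real.exp (c ^ 2 * T / 2) * (gaussianReal (c * T) T.toNNReal s).toReal := by
  have hv := toNNReal_T_ne hT
  rw [gaussianReal_of_var_ne_zero _ hv, restrict_withDensity hs]
  have hd : (gaussianPDF 0 T.toNNReal) = fun w => ((gaussianPDFReal 0 T.toNNReal w).toNNReal : ℝ≥0∞) := rfl
  rw [hd, integral_withDensity_eq_integral_smul
    ((measurable_gaussianPDFReal 0 T.toNNReal).real_toNNReal) _]
  have : ∀ w, (gaussianPDFReal 0 T.toNNReal w).toNNReal • Real.exp (c * w)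
      = Real.exp (c ^ 2 * T / 2) * gaussianPDFReal (c * T) T.toNNReal w := by
    intro w
    rw [NNReal.smul_def, smul_eq_mul, Real.coe_toNNReal _ (gaussianPDFReal_nonneg _ _ _)]
    exact pdf_mul_exp T hT c w
  simp_rw [this]
  rw [integral_const_mul, gaussianReal_apply_eq_integral _ hv s,
    ENNReal.toReal_ofReal (integral_nonneg (fun x => gaussianPDFReal_nonneg _ _ _))]

lemma integrable_exp_gaussian (T : ℝ) (hT : 0 < T) (c : ℝ) :
    Integrable (fun w => Real.exp (c * w)) (gaussianReal 0 T.toNNReal) := by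
  have hv := toNNReal_T_ne hT
  rw [gaussianReal_of_var_ne_zero _ hv]
  have hd : (gaussianPDF 0 T.toNNReal) = fun w => ((gaussianPDFReal 0 T.toNNReal w).toNNReal : ℝ≥0∞) := rfl
  rw [hd, integrable_withDensity_iff_integrable_smul
    ((measurable_gaussianPDFReal 0 T.toNNReal).real_toNNReal)]
  have : (fun w => (gaussianPDFReal 0 T.toNNReal w).toNNReal • Real.exp (c * w))
      = fun w => Real.exp (c ^ 2 * T / 2) * gaussianPDFReal (c * T) T.toNNReal w := by
    funext w
    rw [NNReal.smul_def, smul_eq_mul, Real.coe_toNNReal _ (gaussianPDFReal_nonneg _ _ _)]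
    exact pdf_mul_exp T hT c w
  rw [this]
  exact (integrable_gaussianPDFReal _ _).const_mul _

lemma gaussianReal_Iic (m T : ℝ) (hT : 0 < T) (b : ℝ) :
    ((gaussianReal m T.toNNReal) (Set.Iic b)).toReal = Phi ((b - m) / Real.sqrt T) := by
  have hsT : 0 < Real.sqrt T := Real.sqrt_pos.mpr hT
  have h1 : (gaussianReal 0 1).map (fun x => Real.sqrt T * x) = gaussianReal 0 T.toNNReal := by
    rw [show (fun x => Real.sqrt T * x) = (Real.sqrt T * ·) from rfl, gaussianReal_map_const_mul]
    congr 1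
    · ring
    · ext
      simp [Real.sq_sqrt hT.le, Real.coe_toNNReal _ hT.le]
  have h2 : (gaussianReal 0 T.toNNReal).map (· + m) = gaussianReal m T.toNNReal := by
    rw [gaussianReal_map_add_const, zero_add]
  have hc1 : Measurable fun x : ℝ => Real.sqrt T * x := by fun_prop
  have hc2 : Measurable fun x : ℝ => x + m := by fun_prop
  have hφ : Measurable fun x : ℝ => Real.sqrt T * x + m := by fun_prop
  have hmap : (gaussianReal 0 1).map (fun x => Real.sqrt T * x + m) = gaussianReal m T.toNNReal := by
    rw [← h2, ← h1, Measure.map_map hc2 hc1]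
    rfl
  rw [← hmap, Measure.map_apply hφ measurableSet_Iic]
  have hpre : (fun x => Real.sqrt T * x + m) ⁻¹' (Set.Iic b) = Set.Iic ((b - m) / Real.sqrt T) := by
    ext x
    simp only [Set.mem_preimage, Set.mem_Iic]
    rw [le_div_iff₀ hsT, mul_comm x]
    constructor <;> intro h <;> linarith
  rw [hpre]
  rfl

lemma gaussianReal_Ioi (m T : ℝ) (hT : 0 < T) (b : ℝ) :
    ((gaussianReal m T.toNNReal) (Set.Ioi b)).toReal = 1 - Phi ((b - m) / Real.sqrt T) := by
  rw [← Set.compl_Iic, measure_compl measurableSet_Iic (measure_ne_top _ _), measure_univ,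
    ENNReal.toReal_sub_of_le prob_le_one ENNReal.one_ne_top, ENNReal.toReal_one,
    gaussianReal_Iic m T hT]

lemma gaussianReal_Ioc (m T : ℝ) (hT : 0 < T) {u v : ℝ} (huv : u ≤ v) :
    ((gaussianReal m T.toNNReal) (Set.Ioc u v)).toReal
      = Phi ((v - m) / Real.sqrt T) - Phi ((u - m) / Real.sqrt T) := by
  rw [← Set.Iic_sdiff_Iic, measure_diff (Set.Iic_subset_Iic.mpr huv)
    measurableSet_Iic.nullMeasurableSet (measure_ne_top _ _),
    ENNReal.toReal_sub_of_le (measure_mono (Set.Iic_subset_Iic.mpr huv)) (measure_ne_top _ _),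
    gaussianReal_Iic m T hT, gaussianReal_Iic m T hT]

noncomputable def betaAux (γ r T z : ℝ) : ℝ := (-Real.log z - (r + γ ^ 2 / 2) * T) / γ

lemma betaAux_lt_iff (γ r T z w : ℝ) (hγ : 0 < γ) :
    betaAux γ r T z < w ↔ -((r + γ ^ 2 / 2) * T) - γ * w < Real.log z := by
  unfold betaAux
  rw [div_lt_iff₀ hγ]
  constructor <;> intro h <;> nlinarith

lemma betaAux_le_betaAux (γ r T : ℝ) (hγ : 0 < γ) {z z' : ℝ} (hz : 0 < z) (hzz : z ≤ z') :
    betaAux γ r T z' ≤ betaAux γ r T z := by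
  unfold betaAux
  rw [div_le_div_iff_of_pos_right hγ]
  have := Real.log_le_log hz hzz
  linarith

lemma betaAux_lt_betaAux_iff (γ r T : ℝ) (hγ : 0 < γ) {z z' : ℝ} (hz : 0 < z) (hz' : 0 < z') :
    betaAux γ r T z < betaAux γ r T z' ↔ z' < z := by
  unfold betaAux
  rw [div_lt_div_iff_of_pos_right hγ, ← Real.log_lt_log_iff hz' hz]
  constructor <;> intro h <;> linarith

lemma betaAux_max_eq (γ r T : ℝ) (hγ : 0 < γ) {z z' : ℝ} (hz : 0 < z) (hz' : 0 < z') :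
    betaAux γ r T (max z z') = min (betaAux γ r T z) (betaAux γ r T z') := by
  rcases le_total z z' with h | h
  · rw [max_eq_right h, min_eq_right (betaAux_le_betaAux γ r T hγ hz h)]
  · rw [max_eq_left h, min_eq_left (betaAux_le_betaAux γ r T hγ hz' h)]

lemma betaAux_min_eq (γ r T : ℝ) (hγ : 0 < γ) {z z' : ℝ} (hz : 0 < z) (hz' : 0 < z') :
    betaAux γ r T (min z z') = max (betaAux γ r T z) (betaAux γ r T z') := by
  rcases le_total z z' with h | h
  · rw [min_eq_left h, max_eq_left (betaAux_le_betaAux γ r T hγ hz h)]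
  · rw [min_eq_right h, max_eq_right (betaAux_le_betaAux γ r T hγ hz' h)]

lemma PhiDbar_ofReal_eq (γ r T k c z : ℝ) (hγ : 0 < γ) (hT : 0 < T) (hz : 0 < z)
    (hc : c = -(k * γ)) :
    PhiDbar γ r T 0 1 k (ENNReal.ofReal z)
      = Phi ((betaAux γ r T z - c * T) / Real.sqrt T) := by
  have h0 : ENNReal.ofReal z ≠ 0 := by simp [ENNReal.ofReal_eq_zero, not_le, hz]
  have hsT : Real.sqrt T ≠ 0 := (Real.sqrt_pos.mpr hT).ne'
  rw [PhiDbar, if_neg h0, if_neg ENNReal.ofReal_ne_top, ENNReal.toReal_ofReal hz.le]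
  congr 1
  rw [one_div, Real.log_inv, sub_zero, hc]
  rw [show betaAux γ r T z - -(k * γ) * T = betaAux γ r T z + k * γ * T from by ring]
  rw [add_div, betaAux, div_div, mul_assoc, mul_div_assoc, Real.div_sqrt]
  ring

lemma integral_indicator_exp (T : ℝ) (hT : 0 < T) (K c : ℝ) {s : Set ℝ} (hs : MeasurableSet s) :
    ∫ w, s.indicator (fun w => K * Real.exp (c * w)) w ∂(gaussianReal 0 T.toNNReal)
      = K * Real.exp (c ^ 2 * T / 2) * ((gaussianReal (c * T) T.toNNReal) s).toReal := by
  rw [integral_indicator hs, integral_const_mul, integral_exp_gaussian T hT c hs, mul_assoc]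

set_option maxHeartbeats 1000000 in
theorem case_I_conditional_value_function
    (T γ r σF μF p₂ lam V ψ F₀ A D : ℝ)
    (hT : 0 < T) (hγ : 0 < γ) (hr : 0 < r) (hσF : 0 < σF)
    (hp : p₂ < 1) (hp0 : p₂ ≠ 0) (hlam : 0 < lam) (hV : 0 < V) (hψ : 0 < ψ) (hF₀ : 0 < F₀)
    (hA : A = ψ * F₀ * hF γ r μF σF 0 T)
    (hD : D = 1 + σF * (p₂ - 1) / γ) (hCaseI : 0 < D) :
    (∫ w, (1 / p₂) *
        (max V (max
          (A * (Real.exp (-(r + γ ^ 2 / 2) * T - γ * w)) ^ (-(σF / γ)))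
          ((lam * Real.exp (-(r + γ ^ 2 / 2) * T - γ * w)) ^ (1 / (p₂ - 1))))) ^ p₂
        ∂(gaussianReal 0 (Real.toNNReal T)))
      = (1 / p₂) * V ^ p₂ *
          xi γ r T 0 1 0
            (ENNReal.ofReal (max ((A / V) ^ (γ / σF)) (V ^ (p₂ - 1) / lam))) ⊤
        + (1 / p₂) * A ^ p₂ *
            xi γ r T 0 1 (-(σF * p₂ / γ))
              (ENNReal.ofReal ((A ^ (p₂ - 1) / lam) ^ (1 / D)))
              (ENNReal.ofReal ((A / V) ^ (γ / σF)))
        + (1 / p₂) * lam ^ (p₂ / (p₂ - 1)) *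
            xi γ r T 0 1 (p₂ / (p₂ - 1)) 0
              (ENNReal.ofReal (min (V ^ (p₂ - 1) / lam) ((A ^ (p₂ - 1) / lam) ^ (1 / D)))) := by
  have hv : T.toNNReal ≠ 0 := toNNReal_T_ne hT
  have hp1 : p₂ - 1 < 0 := by linarith
  have hA' : 0 < A := by
    rw [hA]; exact mul_pos (mul_pos hψ hF₀) (Real.exp_pos _)
  set z1 := (A / V) ^ (γ / σF) with hz1def
  set z2 := V ^ (p₂ - 1) / lam with hz2def
  set z3 := (A ^ (p₂ - 1) / lam) ^ (1 / D) with hz3def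
  have hz1 : 0 < z1 := Real.rpow_pos_of_pos (div_pos hA' hV) _
  have hz2 : 0 < z2 := div_pos (Real.rpow_pos_of_pos hV _) hlam
  have hz3 : 0 < z3 := Real.rpow_pos_of_pos (div_pos (Real.rpow_pos_of_pos hA' _) hlam) _
  have hlz1 : Real.log z1 = γ / σF * (Real.log A - Real.log V) := by
    rw [hz1def, Real.log_rpow (div_pos hA' hV), Real.log_div hA'.ne' hV.ne']
  have hlz2 : Real.log z2 = (p₂ - 1) * Real.log V - Real.log lam := by
    rw [hz2def, Real.log_div (Real.rpow_pos_of_pos hV _).ne' hlam.ne', Real.log_rpow hV]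
  have hlz3 : Real.log z3 = ((p₂ - 1) * Real.log A - Real.log lam) / D := by
    rw [hz3def, Real.log_rpow (div_pos (Real.rpow_pos_of_pos hA' _) hlam),
      Real.log_div (Real.rpow_pos_of_pos hA' _).ne' hlam.ne', Real.log_rpow hA']
    ring
  have hZ : ∀ w : ℝ, (0:ℝ) < Real.exp (-(r + γ ^ 2 / 2) * T - γ * w) := fun w => Real.exp_pos _
  have hFpos : ∀ w : ℝ, 0 < A * (Real.exp (-(r + γ ^ 2 / 2) * T - γ * w)) ^ (-(σF / γ)) :=
    fun w => mul_pos hA' (Real.rpow_pos_of_pos (hZ w) _)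
  have hGpos : ∀ w : ℝ, 0 < (lam * Real.exp (-(r + γ ^ 2 / 2) * T - γ * w)) ^ (1 / (p₂ - 1)) :=
    fun w => Real.rpow_pos_of_pos (mul_pos hlam (hZ w)) _
  have iff1 : ∀ w : ℝ,
      (V < A * (Real.exp (-(r + γ ^ 2 / 2) * T - γ * w)) ^ (-(σF / γ)))
        ↔ betaAux γ r T z1 < w := by
    intro w
    rw [← Real.log_lt_log_iff hV (hFpos w),
      Real.log_mul hA'.ne' (Real.rpow_pos_of_pos (hZ w) _).ne',
      Real.log_rpow (hZ w), Real.log_exp, betaAux_lt_iff γ r T z1 w hγ, hlz1]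
    have e1X : γ * (σF / γ * (-(r + γ ^ 2 / 2) * T - γ * w))
        = σF * (-(r + γ ^ 2 / 2) * T - γ * w) := by field_simp; try ring
    have e2X : σF * (γ / σF * (Real.log A - Real.log V))
        = γ * (Real.log A - Real.log V) := by field_simp; try ring
    constructor <;> intro h
    · rw [← mul_lt_mul_iff_right₀ hσF]
      have h' := mul_lt_mul_of_pos_left h hγ
      nlinarith [e1X, e2X, h']
    · rw [← mul_lt_mul_iff_right₀ hγ]
      have h' := mul_lt_mul_of_pos_left h hσF
      nlinarith [e1X, e2X, h']
  have iff2 : ∀ w : ℝ,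
      (V < (lam * Real.exp (-(r + γ ^ 2 / 2) * T - γ * w)) ^ (1 / (p₂ - 1)))
        ↔ betaAux γ r T z2 < w := by
    intro w
    rw [← Real.log_lt_log_iff hV (hGpos w), Real.log_rpow (mul_pos hlam (hZ w)),
      Real.log_mul hlam.ne' (hZ w).ne', Real.log_exp, betaAux_lt_iff γ r T z2 w hγ, hlz2,
      show (1:ℝ) / (p₂ - 1) * (Real.log lam + (-(r + γ ^ 2 / 2) * T - γ * w))
        = (Real.log lam + (-(r + γ ^ 2 / 2) * T - γ * w)) / (p₂ - 1) from by ring,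
      lt_div_iff_of_neg hp1]
    constructor <;> intro h <;> linarith
  have iff3 : ∀ w : ℝ,
      (A * (Real.exp (-(r + γ ^ 2 / 2) * T - γ * w)) ^ (-(σF / γ))
        < (lam * Real.exp (-(r + γ ^ 2 / 2) * T - γ * w)) ^ (1 / (p₂ - 1)))
        ↔ betaAux γ r T z3 < w := by
    intro w
    rw [← Real.log_lt_log_iff (hFpos w) (hGpos w),
      Real.log_mul hA'.ne' (Real.rpow_pos_of_pos (hZ w) _).ne', Real.log_rpow (hZ w),
      Real.log_rpow (mul_pos hlam (hZ w)), Real.log_mul hlam.ne' (hZ w).ne', Real.log_exp,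
      betaAux_lt_iff γ r T z3 w hγ, hlz3, lt_div_iff₀ hCaseI,
      show (1:ℝ) / (p₂ - 1) * (Real.log lam + (-(r + γ ^ 2 / 2) * T - γ * w))
        = (Real.log lam + (-(r + γ ^ 2 / 2) * T - γ * w)) / (p₂ - 1) from by ring,
      lt_div_iff_of_neg hp1]
    have e3X : γ * (σF / γ * (-(r + γ ^ 2 / 2) * T - γ * w))
        = σF * (-(r + γ ^ 2 / 2) * T - γ * w) := by field_simp; try ring
    have hDγ : D * γ = γ + σF * (p₂ - 1) := by rw [hD]; field_simp; try ring
    have hDX : (-((r + γ ^ 2 / 2) * T) - γ * w) * D * γ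
        = (-((r + γ ^ 2 / 2) * T) - γ * w) * γ
          + σF * (p₂ - 1) * (-((r + γ ^ 2 / 2) * T) - γ * w) := by
      rw [mul_assoc, hDγ]; ring
    constructor <;> intro h
    · rw [← mul_lt_mul_iff_right₀ hγ]
      have h' := mul_lt_mul_of_pos_left h hγ
      nlinarith [e3X, hDX, h']
    · rw [← mul_lt_mul_iff_right₀ hγ]
      have h' := mul_lt_mul_of_pos_left h hγ
      nlinarith [e3X, hDX, h']
  have key : ∀ w : ℝ, w ≠ betaAux γ r T z1 → w ≠ betaAux γ r T z2 → w ≠ betaAux γ r T z3 →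
      (1 / p₂) *
        (max V (max
          (A * (Real.exp (-(r + γ ^ 2 / 2) * T - γ * w)) ^ (-(σF / γ)))
          ((lam * Real.exp (-(r + γ ^ 2 / 2) * T - γ * w)) ^ (1 / (p₂ - 1))))) ^ p₂
      = (Set.Iic (min (betaAux γ r T z1) (betaAux γ r T z2))).indicator
          (fun w => 1 / p₂ * V ^ p₂ * Real.exp ((0:ℝ) * w)) w
        + (Set.Ioc (betaAux γ r T z1) (betaAux γ r T z3)).indicator
            (fun w => 1 / p₂ * A ^ p₂ * Real.exp (σF * p₂ / γ * ((r + γ ^ 2 / 2) * T))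
              * Real.exp (σF * p₂ * w)) w
        + (Set.Ioi (max (betaAux γ r T z2) (betaAux γ r T z3))).indicator
            (fun w => 1 / p₂ * lam ^ (p₂ / (p₂ - 1))
              * Real.exp (-(p₂ / (p₂ - 1) * ((r + γ ^ 2 / 2) * T)))
              * Real.exp (-(p₂ / (p₂ - 1) * γ) * w)) w := by
    intro w hw1 hw2 hw3
    have hval2 : 1 / p₂ * (A * (Real.exp (-(r + γ ^ 2 / 2) * T - γ * w)) ^ (-(σF / γ))) ^ p₂
        = 1 / p₂ * A ^ p₂ * Real.exp (σF * p₂ / γ * ((r + γ ^ 2 / 2) * T))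
          * Real.exp (σF * p₂ * w) := by
      rw [Real.mul_rpow hA'.le (Real.rpow_pos_of_pos (hZ w) _).le,
        ← Real.rpow_mul (hZ w).le, Real.rpow_def_of_pos (hZ w), Real.log_exp,
        show (-(r + γ ^ 2 / 2) * T - γ * w) * (-(σF / γ) * p₂)
          = σF * p₂ / γ * ((r + γ ^ 2 / 2) * T) + σF * p₂ * w from by field_simp; try ring,
        Real.exp_add]
      ring
    have hval3 : 1 / p₂ * ((lam * Real.exp (-(r + γ ^ 2 / 2) * T - γ * w)) ^ (1 / (p₂ - 1))) ^ p₂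
        = 1 / p₂ * lam ^ (p₂ / (p₂ - 1)) * Real.exp (-(p₂ / (p₂ - 1) * ((r + γ ^ 2 / 2) * T)))
          * Real.exp (-(p₂ / (p₂ - 1) * γ) * w) := by
      rw [← Real.rpow_mul (mul_pos hlam (hZ w)).le,
        show 1 / (p₂ - 1) * p₂ = p₂ / (p₂ - 1) from by ring,
        Real.mul_rpow hlam.le (hZ w).le, Real.rpow_def_of_pos (hZ w), Real.log_exp,
        show (-(r + γ ^ 2 / 2) * T - γ * w) * (p₂ / (p₂ - 1))
          = -(p₂ / (p₂ - 1) * ((r + γ ^ 2 / 2) * T)) + -(p₂ / (p₂ - 1) * γ) * w from by ring,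
        Real.exp_add]
      ring
    rcases lt_or_gt_of_ne hw1 with h1 | h1
    · rcases lt_or_gt_of_ne hw2 with h2 | h2
      · have hFV : A * (Real.exp (-(r + γ ^ 2 / 2) * T - γ * w)) ^ (-(σF / γ)) ≤ V :=
          not_lt.mp (mt (iff1 w).mp (not_lt.mpr h1.le))
        have hGV : (lam * Real.exp (-(r + γ ^ 2 / 2) * T - γ * w)) ^ (1 / (p₂ - 1)) ≤ V :=
          not_lt.mp (mt (iff2 w).mp (not_lt.mpr h2.le))
        rw [Set.indicator_of_mem (Set.mem_Iic.mpr (le_min h1.le h2.le)),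
          Set.indicator_of_notMem (fun hm => absurd hm.1 (not_lt.mpr h1.le)),
          Set.indicator_of_notMem
            (fun hm => absurd (Set.mem_Ioi.mp hm) (not_lt.mpr (h2.le.trans (le_max_left _ _)))),
          max_eq_left (max_le hFV hGV)]
        simp [Real.exp_zero]
      · rcases lt_or_gt_of_ne hw3 with h3 | h3
        · exfalso
          have hFV : A * (Real.exp (-(r + γ ^ 2 / 2) * T - γ * w)) ^ (-(σF / γ)) ≤ V :=
            not_lt.mp (mt (iff1 w).mp (not_lt.mpr h1.le))
          have hGF := not_lt.mp (mt (iff3 w).mp (not_lt.mpr h3.le))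
          have hVG := (iff2 w).mpr h2
          linarith
        · have hVG := (iff2 w).mpr h2
          have hFG := (iff3 w).mpr h3
          rw [Set.indicator_of_notMem
              (fun hm => absurd (Set.mem_Iic.mp hm) (not_le.mpr ((min_le_right _ _).trans_lt h2))),
            Set.indicator_of_notMem (fun hm => absurd hm.2 (not_le.mpr h3)),
            Set.indicator_of_mem (Set.mem_Ioi.mpr (max_lt h2 h3)),
            max_eq_right hFG.le, max_eq_right hVG.le, hval3]
          ring
    · rcases lt_or_gt_of_ne hw3 with h3 | h3
      · have hVF := (iff1 w).mpr h1
        have hGF := not_lt.mp (mt (iff3 w).mp (not_lt.mpr h3.le))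
        rw [Set.indicator_of_notMem
            (fun hm => absurd (Set.mem_Iic.mp hm) (not_le.mpr ((min_le_left _ _).trans_lt h1))),
          Set.indicator_of_mem (Set.mem_Ioc.mpr ⟨h1, h3.le⟩),
          Set.indicator_of_notMem
            (fun hm => absurd (Set.mem_Ioi.mp hm) (not_lt.mpr (h3.le.trans (le_max_right _ _)))),
          max_eq_left hGF, max_eq_right hVF.le, hval2]
        ring
      · rcases lt_or_gt_of_ne hw2 with h2 | h2
        · exfalso
          have hVF := (iff1 w).mpr h1
          have hFG := (iff3 w).mpr h3
          have hGV := not_lt.mp (mt (iff2 w).mp (not_lt.mpr h2.le))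
          linarith
        · have hVG := (iff2 w).mpr h2
          have hFG := (iff3 w).mpr h3
          rw [Set.indicator_of_notMem
              (fun hm => absurd (Set.mem_Iic.mp hm) (not_le.mpr ((min_le_right _ _).trans_lt h2))),
            Set.indicator_of_notMem (fun hm => absurd hm.2 (not_le.mpr h3)),
            Set.indicator_of_mem (Set.mem_Ioi.mpr (max_lt h2 h3)),
            max_eq_right hFG.le, max_eq_right hVG.le, hval3]
          ring
  have hae : (fun w => (1 / p₂) *
        (max V (max
          (A * (Real.exp (-(r + γ ^ 2 / 2) * T - γ * w)) ^ (-(σF / γ)))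
          ((lam * Real.exp (-(r + γ ^ 2 / 2) * T - γ * w)) ^ (1 / (p₂ - 1))))) ^ p₂)
      =ᵐ[gaussianReal 0 T.toNNReal]
      (fun w =>
        (Set.Iic (min (betaAux γ r T z1) (betaAux γ r T z2))).indicator
          (fun w => 1 / p₂ * V ^ p₂ * Real.exp ((0:ℝ) * w)) w
        + (Set.Ioc (betaAux γ r T z1) (betaAux γ r T z3)).indicator
            (fun w => 1 / p₂ * A ^ p₂ * Real.exp (σF * p₂ / γ * ((r + γ ^ 2 / 2) * T))
              * Real.exp (σF * p₂ * w)) w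
        + (Set.Ioi (max (betaAux γ r T z2) (betaAux γ r T z3))).indicator
            (fun w => 1 / p₂ * lam ^ (p₂ / (p₂ - 1))
              * Real.exp (-(p₂ / (p₂ - 1) * ((r + γ ^ 2 / 2) * T)))
              * Real.exp (-(p₂ / (p₂ - 1) * γ) * w)) w) := by
    have h0 : (gaussianReal 0 T.toNNReal)
        ({betaAux γ r T z1, betaAux γ r T z2, betaAux γ r T z3} : Set ℝ) = 0 :=
      gaussianReal_absolutelyContinuous 0 hv (Set.Finite.measure_zero (Set.toFinite _) volume)
    filter_upwards [measure_eq_zero_iff_ae_notMem.mp h0] with w hw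
    simp only [Set.mem_insert_iff, Set.mem_singleton_iff, not_or] at hw
    exact key w hw.1 hw.2.1 hw.2.2
  have i1 : Integrable ((Set.Iic (min (betaAux γ r T z1) (betaAux γ r T z2))).indicator
      (fun w => 1 / p₂ * V ^ p₂ * Real.exp ((0:ℝ) * w))) (gaussianReal 0 T.toNNReal) :=
    ((integrable_exp_gaussian T hT 0).const_mul _).indicator measurableSet_Iic
  have i2 : Integrable ((Set.Ioc (betaAux γ r T z1) (betaAux γ r T z3)).indicator
      (fun w => 1 / p₂ * A ^ p₂ * Real.exp (σF * p₂ / γ * ((r + γ ^ 2 / 2) * T))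
        * Real.exp (σF * p₂ * w))) (gaussianReal 0 T.toNNReal) :=
    ((integrable_exp_gaussian T hT (σF * p₂)).const_mul _).indicator measurableSet_Ioc
  have i3 : Integrable ((Set.Ioi (max (betaAux γ r T z2) (betaAux γ r T z3))).indicator
      (fun w => 1 / p₂ * lam ^ (p₂ / (p₂ - 1))
        * Real.exp (-(p₂ / (p₂ - 1) * ((r + γ ^ 2 / 2) * T)))
        * Real.exp (-(p₂ / (p₂ - 1) * γ) * w))) (gaussianReal 0 T.toNNReal) :=
    ((integrable_exp_gaussian T hT (-(p₂ / (p₂ - 1) * γ))).const_mul _).indicator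
      measurableSet_Ioi
  have i12 : Integrable (fun w =>
      (Set.Iic (min (betaAux γ r T z1) (betaAux γ r T z2))).indicator
        (fun w => 1 / p₂ * V ^ p₂ * Real.exp ((0:ℝ) * w)) w
      + (Set.Ioc (betaAux γ r T z1) (betaAux γ r T z3)).indicator
          (fun w => 1 / p₂ * A ^ p₂ * Real.exp (σF * p₂ / γ * ((r + γ ^ 2 / 2) * T))
            * Real.exp (σF * p₂ * w)) w) (gaussianReal 0 T.toNNReal) := i1.add i2
  rw [integral_congr_ae hae, integral_add i12 i3, integral_add i1 i2,
    integral_indicator_exp T hT _ _ measurableSet_Iic,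
    integral_indicator_exp T hT _ _ measurableSet_Ioi,
    gaussianReal_Iic (0 * T) T hT, gaussianReal_Ioi (-(p₂ / (p₂ - 1) * γ) * T) T hT]
  have hTerm1 : 1 / p₂ * V ^ p₂ * xi γ r T 0 1 0
        (ENNReal.ofReal (max z1 z2)) ⊤
      = 1 / p₂ * V ^ p₂ * Real.exp ((0:ℝ) ^ 2 * T / 2)
          * Phi ((min (betaAux γ r T z1) (betaAux γ r T z2) - 0 * T) / Real.sqrt T) := by
    unfold xi
    rw [if_pos ENNReal.ofReal_lt_top,
      PhiDbar_ofReal_eq γ r T 0 (0 * 1) (max z1 z2) hγ hT (lt_max_iff.mpr (Or.inl hz1)) (by ring),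
      show PhiDbar γ r T 0 1 0 ⊤ = 0 from by rw [PhiDbar]; simp,
      betaAux_max_eq γ r T hγ hz1 hz2, Real.one_rpow, sub_zero,
      show -(0:ℝ) * (r + γ ^ 2 / 2) * T + (0:ℝ) ^ 2 * γ ^ 2 / 2 * T = (0:ℝ) ^ 2 * T / 2 from by
        ring]
    rw [show (0:ℝ) * 1 * T = 0 * T from by ring]
    ring
  have hTerm3 : 1 / p₂ * lam ^ (p₂ / (p₂ - 1)) * xi γ r T 0 1 (p₂ / (p₂ - 1)) 0
        (ENNReal.ofReal (min z2 z3))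
      = 1 / p₂ * lam ^ (p₂ / (p₂ - 1))
          * Real.exp (-(p₂ / (p₂ - 1) * ((r + γ ^ 2 / 2) * T)))
          * Real.exp ((-(p₂ / (p₂ - 1) * γ)) ^ 2 * T / 2)
          * (1 - Phi ((max (betaAux γ r T z2) (betaAux γ r T z3)
              - -(p₂ / (p₂ - 1) * γ) * T) / Real.sqrt T)) := by
    unfold xi
    rw [if_pos (ENNReal.ofReal_pos.mpr (lt_min hz2 hz3)),
      PhiDbar_ofReal_eq γ r T (p₂ / (p₂ - 1)) (-(p₂ / (p₂ - 1) * γ)) (min z2 z3) hγ hT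
        (lt_min hz2 hz3) rfl,
      show PhiDbar γ r T 0 1 (p₂ / (p₂ - 1)) 0 = 1 from by rw [PhiDbar]; simp,
      betaAux_min_eq γ r T hγ hz2 hz3, Real.one_rpow, sub_zero,
      show -(p₂ / (p₂ - 1)) * (r + γ ^ 2 / 2) * T + (p₂ / (p₂ - 1)) ^ 2 * γ ^ 2 / 2 * T
        = -(p₂ / (p₂ - 1) * ((r + γ ^ 2 / 2) * T)) + (-(p₂ / (p₂ - 1) * γ)) ^ 2 * T / 2 from by
        ring,
      Real.exp_add]
    ring
  rcases lt_or_ge (betaAux γ r T z1) (betaAux γ r T z3) with hb | hb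
  · have hz31 : z3 < z1 := (betaAux_lt_betaAux_iff γ r T hγ hz1 hz3).mp hb
    rw [integral_indicator_exp T hT _ _ measurableSet_Ioc,
      gaussianReal_Ioc (σF * p₂ * T) T hT hb.le]
    have hTerm2 : 1 / p₂ * A ^ p₂ * xi γ r T 0 1 (-(σF * p₂ / γ))
          (ENNReal.ofReal z3) (ENNReal.ofReal z1)
        = 1 / p₂ * A ^ p₂ * Real.exp (σF * p₂ / γ * ((r + γ ^ 2 / 2) * T))
            * Real.exp ((σF * p₂) ^ 2 * T / 2)
            * (Phi ((betaAux γ r T z3 - σF * p₂ * T) / Real.sqrt T)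
              - Phi ((betaAux γ r T z1 - σF * p₂ * T) / Real.sqrt T)) := by
      unfold xi
      rw [if_pos ((ENNReal.ofReal_lt_ofReal_iff hz1).mpr hz31),
        PhiDbar_ofReal_eq γ r T (-(σF * p₂ / γ)) (σF * p₂ * 1) z3 hγ hT hz3
          (by field_simp; try ring),
        PhiDbar_ofReal_eq γ r T (-(σF * p₂ / γ)) (σF * p₂ * 1) z1 hγ hT hz1
          (by field_simp; try ring),
        Real.one_rpow, sub_zero,
        show -(-(σF * p₂ / γ)) * (r + γ ^ 2 / 2) * T + (-(σF * p₂ / γ)) ^ 2 * γ ^ 2 / 2 * T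
          = σF * p₂ / γ * ((r + γ ^ 2 / 2) * T) + (σF * p₂) ^ 2 * T / 2 from by
          field_simp; try ring,
        Real.exp_add]
      rw [show σF * p₂ * 1 * T = σF * p₂ * T from by ring]
      ring
    rw [hTerm1, hTerm2, hTerm3]
  · have hz13 : ¬ z3 < z1 := fun hlt =>
      absurd ((betaAux_lt_betaAux_iff γ r T hγ hz1 hz3).mpr hlt) (not_lt.mpr hb)
    rw [show Set.Ioc (betaAux γ r T z1) (betaAux γ r T z3) = ∅ from
        Set.Ioc_eq_empty (not_lt.mpr hb)]
    have hTerm2 : 1 / p₂ * A ^ p₂ * xi γ r T 0 1 (-(σF * p₂ / γ))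
          (ENNReal.ofReal z3) (ENNReal.ofReal z1) = 0 := by
      unfold xi
      rw [if_neg (fun hlt => hz13 ((ENNReal.ofReal_lt_ofReal_iff hz1).mp hlt))]
      ring
    rw [hTerm1, hTerm2, hTerm3]
    simp only [Set.indicator_empty, integral_zero]
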